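/- arXiv:1202.1027 — 2 statements merged into one kernel-verified Lean document; each statement's English description precedes it below -/
import Mathlib

section
/- Define the algorithm's state evolution: ρ̂^k_0 = |ψ̃_0⟩⟨ψ̃_0| (a pure state), ρ^k_t = U_t ρ̂^k_t U_t†, and ρ̂^k_{t+1} = O^k_p(ρ^k_t), where U_0,...,U_T are unitaries on ℂ^{NM} and O^k_p is the p-faulty oracle. Define pure-state trackers: |ψ̂^k_0⟩ = |ψ̃_0⟩, |ψ^k_t⟩ = U_t|ψ̂^k_t⟩, write |ψ^k_t⟩ = Σ_i |i, α^k_{t,i}⟩, and |ψ̂^k_{t+1}⟩ = |ψ^k_t⟩ - 2(1-p)|k, α^k_{t,k}⟩. Then for every t ∈ {0,...,T} and k ∈ {1,...,N}, ρ^k_t = |ψ^k_t⟩⟨ψ^k_t| + R^k_t for some positive semidefinite matrix R^k_t. -/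
open Matrix ComplexOrder Finset

/-- Outer product `|v⟩⟨v|`. -/
noncomputable def outer {n : Type*} [Fintype n] (v : n → ℂ) : Matrix n n ℂ :=
  Matrix.vecMulVec v (star v)

/-- The perfect Grover oracle `Ô^k = (I - 2|k⟩⟨k|) ⊗ I`. -/
noncomputable def oracleHat {N M : ℕ} (k : Fin N) :
    Matrix (Fin N × Fin M) (Fin N × Fin M) ℂ :=
  Matrix.diagonal fun x => if x.1 = k then -1 else 1

/-- The `p`-faulty oracle channel `O^k_p(ρ) = (1-p)·Ô^k ρ Ô^{k†} + p·ρ`. -/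
noncomputable def faultyOracle {N M : ℕ} (p : ℝ) (k : Fin N)
    (ρ : Matrix (Fin N × Fin M) (Fin N × Fin M) ℂ) :
    Matrix (Fin N × Fin M) (Fin N × Fin M) ℂ :=
  ((1 - p : ℝ) : ℂ) • (oracleHat k * ρ * (oracleHat k)ᴴ) + (p : ℂ) • ρ

/-- Projection of a vector onto the subspace `|k⟩ ⊗ ℂ^M`, i.e. `|k, β_k⟩`. -/
def projVec {N M : ℕ} (k : Fin N) (v : Fin N × Fin M → ℂ) : Fin N × Fin M → ℂ :=
  fun x => if x.1 = k then v x else 0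

/-- The positive semidefinite square root of a positive semidefinite matrix
(the old Mathlib `Matrix.PosSemidef.sqrt`, since removed). -/
noncomputable def posSemidefSqrt {n : Type*} [Fintype n] [DecidableEq n]
    {A : Matrix n n ℂ} (hA : A.PosSemidef) : Matrix n n ℂ :=
  hA.1.eigenvectorUnitary.1 * diagonal ((↑) ∘ (√·) ∘ hA.1.eigenvalues) *
    (star hA.1.eigenvectorUnitary : Matrix n n ℂ)

/-- The trace norm (sum of singular values) of a complex matrix. -/
noncomputable def traceNorm {n : Type*} [Fintype n] [DecidableEq n]
    (A : Matrix n n ℂ) : ℝ :=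
  ((posSemidefSqrt (Matrix.posSemidef_conjTranspose_mul_self A)).trace).re

lemma outer_psd {n : Type*} [Fintype n] (v : n → ℂ) : (outer v).PosSemidef := by
  rw [Matrix.posSemidef_iff_dotProduct_mulVec]
  constructor
  · ext i j
    simp [outer, Matrix.vecMulVec_apply, Matrix.conjTranspose_apply, mul_comm]
  · intro x
    have h : (outer v) *ᵥ x = (star v ⬝ᵥ x) • v := by
      ext i
      simp only [outer, Matrix.mulVec, Matrix.vecMulVec_apply, dotProduct, Pi.smul_apply,
        smul_eq_mul]
      rw [Finset.sum_mul]
      exact Finset.sum_congr rfl fun j _ => by ring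
    rw [h, dotProduct_smul, smul_eq_mul]
    have hz : star v ⬝ᵥ x = star (star x ⬝ᵥ v) := by
      rw [star_dotProduct]
    rw [hz]
    exact star_mul_self_nonneg _

lemma psd_real_smul {n : Type*} [Fintype n] (c : ℝ) (hc : 0 ≤ c)
    {A : Matrix n n ℂ} (hA : A.PosSemidef) : ((c : ℂ) • A).PosSemidef := by
  rw [Matrix.posSemidef_iff_dotProduct_mulVec]
  constructor
  · unfold Matrix.IsHermitian
    rw [Matrix.conjTranspose_smul, hA.1]
    congr 1
    simp [Complex.star_def, Complex.conj_ofReal]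
  · intro x
    rw [Matrix.smul_mulVec, dotProduct_smul, smul_eq_mul]
    exact mul_nonneg (Complex.zero_le_real.mpr hc) (hA.dotProduct_mulVec_nonneg x)

lemma outer_mulVec {n : Type*} [Fintype n] (A : Matrix n n ℂ) (v : n → ℂ) :
    outer (A *ᵥ v) = A * outer v * Aᴴ := by
  unfold outer
  rw [star_mulVec, vecMulVec_eq Unit, vecMulVec_eq Unit, replicateCol_mulVec, replicateRow_vecMul,
    Matrix.mul_assoc, Matrix.mul_assoc, Matrix.mul_assoc]

lemma faultyOracle_add {N M : ℕ} (p : ℝ) (k : Fin N)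
    (A B : Matrix (Fin N × Fin M) (Fin N × Fin M) ℂ) :
    faultyOracle p k (A + B) = faultyOracle p k A + faultyOracle p k B := by
  simp only [faultyOracle, Matrix.mul_add, Matrix.add_mul, smul_add]
  abel

lemma faultyOracle_psd {N M : ℕ} (p : ℝ) (hp0 : 0 ≤ p) (hp1 : p ≤ 1) (k : Fin N)
    {A : Matrix (Fin N × Fin M) (Fin N × Fin M) ℂ} (hA : A.PosSemidef) :
    (faultyOracle p k A).PosSemidef :=
  ((psd_real_smul _ (by linarith) (hA.mul_mul_conjTranspose_same _))).add
    (psd_real_smul _ hp0 hA)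

lemma key_identity {N M : ℕ} (p : ℝ) (k : Fin N) (a : Fin N × Fin M → ℂ) :
    faultyOracle p k (outer a) =
      outer (a - ((2 * (1 - p) : ℝ) : ℂ) • projVec k a)
        + ((4 * p * (1 - p) : ℝ) : ℂ) • outer (projVec k a) := by
  ext i j
  simp only [faultyOracle, outer, oracleHat, Matrix.diagonal_conjTranspose,
    Matrix.mul_diagonal, Matrix.diagonal_mul, Matrix.add_apply, Matrix.smul_apply,
    Matrix.vecMulVec_apply, projVec, Pi.sub_apply, Pi.smul_apply, Pi.star_apply,
    smul_eq_mul, star_trivial]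
  by_cases hi : i.1 = k <;> by_cases hj : j.1 = k <;>
    simp only [hi, hj, if_true, if_false, ite_true, ite_false, star_sub, star_mul',
      star_neg, star_one, star_zero, mul_zero, sub_zero, Complex.star_def,
      Complex.conj_ofReal, map_sub, _root_.map_mul, _root_.map_one, map_ofNat] <;>
    push_cast <;> ring

/-- State-decomposition lemma (Lemma 3.2): the mixed state of the algorithm is
the pure-state tracker plus a positive semidefinite residue. -/
theorem state_decomposition {N M T : ℕ} (p : ℝ) (hp0 : 0 < p) (hp1 : p < 1) (k : Fin N)
    (U : ℕ → Matrix (Fin N × Fin M) (Fin N × Fin M) ℂ)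
    (hU : ∀ t, U t ∈ Matrix.unitaryGroup (Fin N × Fin M) ℂ)
    (ψ₀ : Fin N × Fin M → ℂ) (hψ₀ : ∑ x, ‖ψ₀ x‖ ^ 2 = 1)
    (ρ ρhat : ℕ → Matrix (Fin N × Fin M) (Fin N × Fin M) ℂ)
    (ψ ψhat : ℕ → Fin N × Fin M → ℂ)
    (hρhat0 : ρhat 0 = outer ψ₀)
    (hρ : ∀ t, ρ t = U t * ρhat t * (U t)ᴴ)
    (hρhatS : ∀ t, ρhat (t + 1) = faultyOracle p k (ρ t))
    (hψhat0 : ψhat 0 = ψ₀)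
    (hψ : ∀ t, ψ t = (U t).mulVec (ψhat t))
    (hψhatS : ∀ t, ψhat (t + 1) = ψ t - ((2 * (1 - p) : ℝ) : ℂ) • projVec k (ψ t)) :
    ∀ t ≤ T, ∃ R : Matrix (Fin N × Fin M) (Fin N × Fin M) ℂ,
      R.PosSemidef ∧ ρ t = outer (ψ t) + R := by
  have main : ∀ t, ∃ Rh : Matrix (Fin N × Fin M) (Fin N × Fin M) ℂ,
      Rh.PosSemidef ∧ ρhat t = outer (ψhat t) + Rh := by
    intro t
    induction t with
    | zero => exact ⟨0, Matrix.PosSemidef.zero, by simp [hρhat0, hψhat0]⟩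
    | succ t ih =>
      obtain ⟨Rh, hRh, hEq⟩ := ih
      have hρt : ρ t = outer (ψ t) + U t * Rh * (U t)ᴴ := by
        rw [hρ t, hEq, Matrix.mul_add, Matrix.add_mul, hψ t, outer_mulVec]
      refine ⟨((4 * p * (1 - p) : ℝ) : ℂ) • outer (projVec k (ψ t))
          + faultyOracle p k (U t * Rh * (U t)ᴴ), ?_, ?_⟩
      · exact (psd_real_smul _ (by nlinarith) (outer_psd _)).add
          (faultyOracle_psd p hp0.le hp1.le k (hRh.mul_mul_conjTranspose_same _))
      · rw [hρhatS, hρt, faultyOracle_add, key_identity, hψhatS]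
        abel
  intro t _
  obtain ⟨Rh, hRh, hEq⟩ := main t
  refine ⟨U t * Rh * (U t)ᴴ, hRh.mul_mul_conjTranspose_same _, ?_⟩
  rw [hρ t, hEq, Matrix.mul_add, Matrix.add_mul, hψ t, outer_mulVec]
end

section
/- Progress increase bound: with the pure-state trackers as above, define H^k_t = ‖|ψ^0_t⟩ - |ψ^k_t⟩‖². Then for all k ∈ {1,...,N} and 0 ≤ t < T, H^k_{t+1} - H^k_t ≤ ((1-p)/p)·‖α^0_{t,k}‖², where α^0_{t,k} ∈ ℂ^M is the k-th component of |ψ^0_t⟩ (the evolution with the null oracle, for which |ψ̂^0_{t+1}⟩ = |ψ^0_t⟩). -/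
open Matrix ComplexOrder Finset

lemma norm_sq_complex (z : ℂ) : ‖z‖ ^ 2 = z.re ^ 2 + z.im ^ 2 := by
  rw [Complex.sq_norm, Complex.normSq_apply]; ring

lemma sum_sq_eq_re_dot {n : Type*} [Fintype n] (z : n → ℂ) :
    ∑ x, ‖z x‖ ^ 2 = (star z ⬝ᵥ z).re := by
  simp only [dotProduct, Pi.star_apply, Complex.re_sum]
  refine Finset.sum_congr rfl fun x _ => ?_
  rw [norm_sq_complex, Complex.star_def, Complex.mul_re]
  simp
  ring

lemma sq_mulVec_unitary {n : Type*} [Fintype n] [DecidableEq n]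
    (U : Matrix n n ℂ) (hU : U ∈ Matrix.unitaryGroup n ℂ) (w : n → ℂ) :
    ∑ x, ‖U.mulVec w x‖ ^ 2 = ∑ x, ‖w x‖ ^ 2 := by
  rw [sum_sq_eq_re_dot, sum_sq_eq_re_dot]
  congr 1
  rw [Matrix.star_mulVec, Matrix.dotProduct_mulVec, Matrix.vecMul_vecMul,
    ← Matrix.star_eq_conjTranspose, (Matrix.mem_unitaryGroup_iff'.mp hU : star U * U = 1),
    Matrix.vecMul_one]

lemma pointwise_bound (p : ℝ) (hp0 : 0 < p) (hp1 : p < 1) (α β : ℂ) :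
    ‖α - β + ((2 * (1 - p) : ℝ) : ℂ) * β‖ ^ 2 - ‖α - β‖ ^ 2 ≤ ((1 - p) / p) * ‖α‖ ^ 2 := by
  rw [div_mul_eq_mul_div, le_div_iff₀ hp0]
  simp only [norm_sq_complex, Complex.add_re, Complex.add_im, Complex.sub_re, Complex.sub_im,
    Complex.mul_re, Complex.mul_im, Complex.ofReal_re, Complex.ofReal_im]
  nlinarith [sq_nonneg (α.re - 2 * p * β.re), sq_nonneg (α.im - 2 * p * β.im),
    sq_nonneg α.re, sq_nonneg α.im, mul_pos hp0 (sub_pos.mpr hp1)]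

/-- Progress-increase bound (Lemma 3.5):
`H^k_{t+1} - H^k_t ≤ ((1-p)/p)·‖α⁰_{t,k}‖²`. -/
theorem progress_increase {N M T : ℕ} (p : ℝ) (hp0 : 0 < p) (hp1 : p < 1) (k : Fin N)
    (U : ℕ → Matrix (Fin N × Fin M) (Fin N × Fin M) ℂ)
    (hU : ∀ t, U t ∈ Matrix.unitaryGroup (Fin N × Fin M) ℂ)
    (ψ₀ ψk : ℕ → Fin N × Fin M → ℂ)
    (hψ₀S : ∀ t, ψ₀ (t + 1) = (U (t + 1)).mulVec (ψ₀ t))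
    (hψkS : ∀ t, ψk (t + 1) =
      (U (t + 1)).mulVec (ψk t - ((2 * (1 - p) : ℝ) : ℂ) • projVec k (ψk t)))
    (t : ℕ) (ht : t < T) :
    (∑ x, ‖ψ₀ (t + 1) x - ψk (t + 1) x‖ ^ 2) - (∑ x, ‖ψ₀ t x - ψk t x‖ ^ 2)
      ≤ ((1 - p) / p) * ∑ b, ‖ψ₀ t (k, b)‖ ^ 2 := by
  set a := ψ₀ t with ha
  set b := ψk t with hb
  set w : Fin N × Fin M → ℂ := fun x => a x - b x + ((2 * (1 - p) : ℝ) : ℂ) * projVec k b x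
    with hw
  have step1 : ∀ x, ψ₀ (t + 1) x - ψk (t + 1) x = (U (t + 1)).mulVec w x := by
    intro x
    rw [hψ₀S, hψkS]
    simp only [hw, Matrix.mulVec, dotProduct, Pi.sub_apply, Pi.smul_apply,
      smul_eq_mul]
    rw [← Finset.sum_sub_distrib]
    refine Finset.sum_congr rfl fun y _ => ?_
    ring
  have step2 : ∑ x, ‖ψ₀ (t + 1) x - ψk (t + 1) x‖ ^ 2 = ∑ x, ‖w x‖ ^ 2 := by
    rw [Finset.sum_congr rfl fun x _ => by rw [step1 x],
      sq_mulVec_unitary _ (hU (t + 1))]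
  rw [step2]
  have key : ∀ x : Fin N × Fin M, ‖w x‖ ^ 2 - ‖a x - b x‖ ^ 2
      ≤ if x.1 = k then ((1 - p) / p) * ‖a x‖ ^ 2 else 0 := by
    intro x
    by_cases hx : x.1 = k
    · simp only [hw, projVec, hx, if_true]
      exact pointwise_bound p hp0 hp1 (a x) (b x)
    · simp [hw, projVec, hx]
  calc ∑ x, ‖w x‖ ^ 2 - ∑ x, ‖a x - b x‖ ^ 2
      = ∑ x, (‖w x‖ ^ 2 - ‖a x - b x‖ ^ 2) := by rw [Finset.sum_sub_distrib]
    _ ≤ ∑ x, if x.1 = k then ((1 - p) / p) * ‖a x‖ ^ 2 else 0 :=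
        Finset.sum_le_sum fun x _ => key x
    _ = ((1 - p) / p) * ∑ b', ‖a (k, b')‖ ^ 2 := by
        rw [Fintype.sum_prod_type, Finset.mul_sum]
        rw [Fintype.sum_eq_single k]
        · exact Finset.sum_congr rfl fun j _ => by simp
        · intro i hi
          simp [hi]
end
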